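/- The operator ∂ is a derivation of the |·|-twisted current bracket: for all ξ, η ∈ 𝔫[u], ∂[ξ,η] = [∂ξ, η] + [ξ, ∂η]. -/

import Mathlib

/-- The structure constant `|a|^p * |b|^q / |a+b|^(p+q)` of the `|·|`-twisted
current bracket. -/
noncomputable def twistCoeff {M : Type*} [AddCommMonoid M] (absM : M →+ ℤ)
    (a b : M) (p q : ℕ) : ℚ :=
  ((absM a : ℚ) ^ p * (absM b : ℚ) ^ q) / ((absM (a + b) : ℚ) ^ (p + q))

/-- The lowering operator `∂` (the `ℚ`-linear operator on
`𝔫[u] = ℕ →₀ 𝔫` sending `x u^p ↦ p |a| x u^(p-1)` for `x ∈ 𝔫_a`, in particular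
`∂(x ⊗ 1) = 0`) is a derivation of the `|·|`-twisted current bracket:
`∂[ξ,η] = [∂ξ, η] + [ξ, ∂η]`. -/
theorem partial_is_derivation_of_twisted_current_bracket
    {M : Type*} [AddCommMonoid M] [DecidableEq M]
    {L : Type*} [LieRing L] [LieAlgebra ℚ L]
    (𝒢 : M → Submodule ℚ L)
    (hInternal : DirectSum.IsInternal 𝒢)
    (hzero : 𝒢 0 = ⊥)
    (hbracket : ∀ (a b : M) (x y : L), x ∈ 𝒢 a → y ∈ 𝒢 b → ⁅x, y⁆ ∈ 𝒢 (a + b))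
    (absM : M →+ ℤ)
    (habs : ∀ a : M, a ≠ 0 → 0 < absM a)
    (B : (ℕ →₀ L) →ₗ[ℚ] (ℕ →₀ L) →ₗ[ℚ] (ℕ →₀ L))
    (hB : ∀ (a b : M) (x y : L), x ∈ 𝒢 a → y ∈ 𝒢 b → ∀ p q : ℕ,
      B (Finsupp.single p x) (Finsupp.single q y)
        = Finsupp.single (p + q) (twistCoeff absM a b p q • ⁅x, y⁆))
    (D : (ℕ →₀ L) →ₗ[ℚ] (ℕ →₀ L))
    (hD : ∀ (a : M) (x : L), x ∈ 𝒢 a → ∀ p : ℕ,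
      D (Finsupp.single p x)
        = Finsupp.single (p - 1) (((p : ℚ) * (absM a : ℚ)) • x)) :
    ∀ ξ η : ℕ →₀ L, D (B ξ η) = B (D ξ) η + B ξ (D η) := by
  have key : ∀ (a b : M) (x y : L), x ∈ 𝒢 a → y ∈ 𝒢 b → ∀ p q : ℕ,
      D (B (Finsupp.single p x) (Finsupp.single q y)) =
        B (D (Finsupp.single p x)) (Finsupp.single q y) +
          B (Finsupp.single p x) (D (Finsupp.single q y)) := by
    intro a b x y hx hy p q
    by_cases ha : a = 0
    · have hx0 : x = 0 := by subst ha; simpa [hzero] using hx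
      simp [hx0]
    by_cases hb : b = 0
    · have hy0 : y = 0 := by subst hb; simpa [hzero] using hy
      simp [hy0]
    have hA : (0:ℚ) < (absM a : ℚ) := by exact_mod_cast habs a ha
    have hBb : (0:ℚ) < (absM b : ℚ) := by exact_mod_cast habs b hb
    have hS : (absM (a+b) : ℚ) = (absM a : ℚ) + (absM b : ℚ) := by
      rw [map_add]; push_cast; ring
    have hSne : (absM (a+b) : ℚ) ≠ 0 := by rw [hS]; positivity
    have hSne' : (absM a : ℚ) + (absM b : ℚ) ≠ 0 := by positivity
    rw [hB a b x y hx hy p q,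
        hD (a+b) _ (Submodule.smul_mem _ _ (hbracket a b x y hx hy)),
        hD a x hx p, hD b y hy q,
        hB a b _ y (Submodule.smul_mem _ _ hx) hy,
        hB a b x _ hx (Submodule.smul_mem _ _ hy),
        smul_lie, lie_smul]
    simp only [smul_smul]
    set z := ⁅x, y⁆
    cases p with
    | zero =>
      cases q with
      | zero => simp [twistCoeff]
      | succ q =>
        simp only [Nat.cast_zero, zero_mul, mul_zero, zero_smul,
          Finsupp.single_zero, zero_add]
        congr 1
        congr 1
        unfold twistCoeff
        simp only [Nat.add_sub_cancel, pow_zero, one_mul, zero_add,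
          Nat.cast_add, Nat.cast_one, hS]
        field_simp
        ring
    | succ p =>
      cases q with
      | zero =>
        simp only [Nat.cast_zero, zero_mul, mul_zero, zero_smul,
          Finsupp.single_zero, add_zero]
        congr 1
        congr 1
        unfold twistCoeff
        simp only [Nat.add_sub_cancel, pow_zero, mul_one, add_zero,
          Nat.cast_add, Nat.cast_one, hS]
        field_simp
        ring
      | succ q =>
        have hidx1 : p + 1 + (q + 1) - 1 = p + (q + 1) := by omega
        have hidx2 : p + 1 + (q + 1 - 1) = p + (q + 1) := by omega
        have hidx3 : (p + 1 - 1) + (q + 1) = p + (q + 1) := by omega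
        rw [hidx1, hidx2, hidx3, ← Finsupp.single_add, ← add_smul]
        congr 1
        congr 1
        unfold twistCoeff
        simp only [Nat.add_sub_cancel, hS]
        push_cast
        field_simp
        ring
  have hspan : ∀ ζ : ℕ →₀ L, ζ ∈ Submodule.span ℚ
      {f : ℕ →₀ L | ∃ (p : ℕ) (a : M) (x : L), x ∈ 𝒢 a ∧ f = Finsupp.single p x} := by
    intro ζ
    induction ζ using Finsupp.induction with
    | zero => exact Submodule.zero_mem _
    | single_add p x f _ _ ih =>
      refine Submodule.add_mem _ ?_ ih
      have hx : x ∈ ⨆ a, 𝒢 a := by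
        rw [hInternal.submodule_iSup_eq_top]; trivial
      refine Submodule.iSup_induction 𝒢 (motive := fun w =>
        Finsupp.single p w ∈ Submodule.span ℚ
          {f : ℕ →₀ L | ∃ (p : ℕ) (a : M) (x : L), x ∈ 𝒢 a ∧ f = Finsupp.single p x}) hx ?_ ?_ ?_
      · intro a z hz; exact Submodule.subset_span ⟨p, a, z, hz, rfl⟩
      · simp
      · intro u v hu hv
        rw [Finsupp.single_add]; exact Submodule.add_mem _ hu hv
  intro ξ η
  induction hspan ξ using Submodule.span_induction with
  | mem f hf =>
    obtain ⟨p, a, x, hx, rfl⟩ := hf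
    induction hspan η using Submodule.span_induction with
    | mem g hg =>
      obtain ⟨q, b, y, hy, rfl⟩ := hg
      exact key a b x y hx hy p q
    | zero => simp
    | add g₁ g₂ _ _ h₁ h₂ =>
      simp only [map_add, h₁, h₂]
      abel
    | smul c g _ h =>
      simp only [map_smul, h, smul_add]
  | zero => simp
  | add f₁ f₂ _ _ h₁ h₂ =>
    simp only [map_add, LinearMap.add_apply, h₁, h₂]
    abel
  | smul c f _ h =>
    simp only [map_smul, LinearMap.smul_apply, h, smul_add]
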